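/- Under the hypotheses of the previous statement, if additionally 0 < α ≤ 2(1-σ)/(Lλ_max) for some σ ∈ (0,1) and both Σ_{i∈I⁻} gⁱpⁱ ≥ 0 and Σ_{i∈I⁺} gⁱ(xⁱ - x(α)ⁱ) ≥ 0, then the sufficient decrease (Armijo-type) condition holds: f(x) - f(x(α)) ≥ σ[α Σ_{i∈I⁻} gⁱpⁱ + Σ_{i∈I⁺} gⁱ(xⁱ - x(α)ⁱ)]. -/
import Mathlib

/-- the Armijo sufficient-decrease condition under the stepsize bound. -/
theorem stmt_9 (n : ℕ) (f : (Fin n → ℝ) → ℝ) (hf : Differentiable ℝ f)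
    (gradf : (Fin n → ℝ) → Fin n → ℝ)
    (hgrad : ∀ x i, gradf x i = fderiv ℝ f x (Pi.single i 1))
    (L : ℝ) (hL : 0 < L)
    (hlip : ∀ u v : Fin n → ℝ,
      Real.sqrt (∑ i, (gradf u i - gradf v i) ^ 2) ≤ L * Real.sqrt (∑ i, (u i - v i) ^ 2))
    (x : Fin n → ℝ) (hx : ∀ i, 0 ≤ x i)
    (p : Fin n → ℝ) (α : ℝ) (lmax : ℝ) (hlmax : 0 < lmax)
    (σ : ℝ) (hσ : σ ∈ Set.Ioo (0 : ℝ) 1)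
    (hα : 0 < α) (hα2 : α ≤ 2 * (1 - σ) / (L * lmax))
    (Iplus : Finset (Fin n))
    (g : Fin n → ℝ) (hg : g = gradf x)
    (xα : Fin n → ℝ) (hxα : xα = fun i => max (x i - α * p i) 0)
    (hquad : f xα - f x ≤ (α ^ 2 * lmax * L / 2 - α) * ∑ i ∈ Iplusᶜ, g i * p i
      + (α * lmax * L / 2 - 1) * ∑ i ∈ Iplus, g i * (x i - xα i))
    (hpos1 : 0 ≤ ∑ i ∈ Iplusᶜ, g i * p i)
    (hpos2 : 0 ≤ ∑ i ∈ Iplus, g i * (x i - xα i)) :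
    f x - f xα ≥ σ * (α * ∑ i ∈ Iplusᶜ, g i * p i + ∑ i ∈ Iplus, g i * (x i - xα i)) := by
  obtain ⟨hσ0, hσ1⟩ := hσ
  have hLl : 0 < L * lmax := mul_pos hL hlmax
  have key : α * (L * lmax) ≤ 2 * (1 - σ) := by
    calc α * (L * lmax) ≤ 2 * (1 - σ) / (L * lmax) * (L * lmax) :=
          mul_le_mul_of_nonneg_right hα2 hLl.le
      _ = 2 * (1 - σ) := div_mul_cancel₀ _ hLl.ne'
  nlinarith [mul_le_mul_of_nonneg_right key hpos2,
    mul_le_mul_of_nonneg_right (mul_le_mul_of_nonneg_left key hα.le) hpos1]
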